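/- For every even integer w ≥ 2, the number of natural numbers n with n ≥ (w² − w)/2 that do not belong to the additive submonoid Γ_{w,w+1} of ℕ generated by w and w+1 is exactly (w² + 2w)/8; that is, the gap-counting function I_{w,w+1}(j) = #(ℤ_{≥j} ∖ Γ_{w,w+1}) satisfies I_{w,w+1}((w² − w)/2) = (w² + 2w)/8. -/
import Mathlib

lemma divmod_eq (w q r : ℕ) (hw : 0 < w) (h : r < w) :
    (q * w + r) / w = q ∧ (q * w + r) % w = r := by
  rw [Nat.div_mod_unique hw]
  exact ⟨by ring, h⟩

lemma mem_gamma_iff (w n : ℕ) (hw : 0 < w) :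
    n ∈ AddSubmonoid.closure ({w, w + 1} : Set ℕ) ↔ n % w ≤ n / w := by
  rw [AddSubmonoid.mem_closure_pair]
  constructor
  · rintro ⟨i, j, rfl⟩
    simp only [smul_eq_mul]
    obtain ⟨a, b, hb, rfl⟩ : ∃ a b, b < w ∧ j = a * w + b :=
      ⟨j / w, j % w, Nat.mod_lt _ hw, by
        rw [Nat.mul_comm (j / w) w]; exact (Nat.div_add_mod j w).symm⟩
    have key : i * w + (a * w + b) * (w + 1) = (i + (a * w + b) + a) * w + b := by ring
    rw [key, (divmod_eq w _ _ hw hb).1, (divmod_eq w _ _ hw hb).2]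
    omega
  · intro h
    obtain ⟨d, hd⟩ := Nat.exists_eq_add_of_le h
    refine ⟨d, n % w, ?_⟩
    simp only [smul_eq_mul]
    rw [show d * w + n % w * (w + 1) = w * (n % w + d) + n % w from by ring, ← hd]
    exact Nat.div_add_mod n w

theorem gap_count_V0 (w : ℕ) (hw : 2 ≤ w) (hweven : Even w) :
    {n : ℕ | (w ^ 2 - w) / 2 ≤ n ∧ n ∉ AddSubmonoid.closure ({w, w + 1} : Set ℕ)}.ncard =
      (w ^ 2 + 2 * w) / 8 := by
  obtain ⟨m, hm⟩ := hweven
  have hw2 : w = 2 * m := by omega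
  have hm1 : 1 ≤ m := by omega
  subst hw2
  have hwpos : 0 < 2 * m := by omega
  have hN : ((2*m) ^ 2 - 2*m) / 2 = (m - 1) * (2*m) + m := by
    have h1 : (2*m) ^ 2 - 2*m = 2 * ((m - 1) * (2*m) + m) := by
      apply Nat.sub_eq_of_eq_add
      obtain ⟨k, rfl⟩ := Nat.exists_eq_add_of_le hm1
      have e : 1 + k - 1 = k := by omega
      rw [e]; ring
    omega
  set f : (_ : ℕ) × ℕ → ℕ := fun p => (2*m - 2 - p.1) * (2*m) + (2*m - 1 - p.1 + p.2) with hf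
  set T : Finset ((_ : ℕ) × ℕ) := (Finset.range m).sigma (fun a => Finset.range (a + 1)) with hT
  have hmemT : ∀ p : (_ : ℕ) × ℕ, p ∈ T ↔ p.1 < m ∧ p.2 ≤ p.1 := by
    intro p
    simp only [hT, Finset.mem_sigma, Finset.mem_range]
    omega
  have key : ∀ p : (_ : ℕ) × ℕ, p ∈ T →
      (f p) / (2*m) = 2*m - 2 - p.1 ∧ (f p) % (2*m) = 2*m - 1 - p.1 + p.2 := by
    intro p hp
    rw [hmemT] at hp
    exact divmod_eq _ _ _ hwpos (by omega)
  have hinj : Set.InjOn f ↑T := by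
    intro p hp' q hq' hfeq
    rw [Finset.mem_coe] at hp' hq'
    have kp := key p hp'
    have kq := key q hq'
    rw [hmemT] at hp' hq'
    have e1 : 2*m - 2 - p.1 = 2*m - 2 - q.1 := by rw [← kp.1, ← kq.1, hfeq]
    have e2 : 2*m - 1 - p.1 + p.2 = 2*m - 1 - q.1 + q.2 := by rw [← kp.2, ← kq.2, hfeq]
    obtain ⟨p1, p2⟩ := p
    obtain ⟨q1, q2⟩ := q
    simp only at e1 e2 hp' hq' ⊢
    have e3 : p1 = q1 := by omega
    subst e3
    have e4 : p2 = q2 := by omega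
    subst e4
    rfl
  have hseteq : {n : ℕ | ((2*m) ^ 2 - 2*m) / 2 ≤ n ∧
      n ∉ AddSubmonoid.closure ({2*m, 2*m + 1} : Set ℕ)} = ↑(T.image f) := by
    ext n
    simp only [Set.mem_setOf_eq, Finset.coe_image, Set.mem_image, Finset.mem_coe,
      mem_gamma_iff _ n hwpos, not_le, hN]
    constructor
    · rintro ⟨hle, hgap⟩
      set q := n / (2*m) with hq
      set r := n % (2*m) with hr
      have hdm : (2*m) * q + r = n := Nat.div_add_mod n (2*m)
      have hrlt : r < 2*m := Nat.mod_lt _ hwpos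
      have hqge : m - 1 ≤ q := by
        by_contra hc
        push_neg at hc
        have h2 : q ≤ m - 2 := by omega
        have h3 : (2*m) * q ≤ (2*m) * (m - 2) := Nat.mul_le_mul_left _ h2
        have h4 : (2*m) * (m - 2) + 2*m ≤ (m - 1) * (2*m) := by
          rcases Nat.lt_or_ge m 2 with h | h
          · interval_cases m <;> omega
          · have h5 : (2*m) * (m - 2) + 2*m = (m - 1) * (2*m) := by
              obtain ⟨k, rfl⟩ := Nat.exists_eq_add_of_le h
              have e : 2 + k - 2 = k := by omega
              have e' : 2 + k - 1 = k + 1 := by omega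
              rw [e, e']; ring
            omega
        omega
      refine ⟨⟨2*m - 2 - q, r - q - 1⟩, ?_, ?_⟩
      · rw [hmemT]
        dsimp only
        exact ⟨by omega, by omega⟩
      · show (2*m - 2 - (2*m - 2 - q)) * (2*m) + (2*m - 1 - (2*m - 2 - q) + (r - q - 1)) = n
        have e1 : 2*m - 2 - (2*m - 2 - q) = q := by omega
        have e2 : 2*m - 1 - (2*m - 2 - q) + (r - q - 1) = r := by omega
        rw [e1, e2, Nat.mul_comm, hdm]
    · rintro ⟨p, hp, rfl⟩
      have kp := key p hp
      rw [hmemT] at hp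
      constructor
      · have h1 : (m - 1) * (2*m) ≤ (2*m - 2 - p.1) * (2*m) :=
          Nat.mul_le_mul_right _ (by omega)
        show (m - 1) * (2*m) + m ≤ (2*m - 2 - p.1) * (2*m) + (2*m - 1 - p.1 + p.2)
        omega
      · rw [kp.1, kp.2]
        omega
  rw [hseteq, Set.ncard_coe_finset, Finset.card_image_of_injOn hinj]
  rw [hT, Finset.card_sigma]
  simp only [Finset.card_range]
  obtain ⟨c, hc⟩ : ∃ c, m * (m + 1) = c + c := Nat.even_mul_succ_self m
  have hsum2 : (∑ a ∈ Finset.range m, (a + 1)) * 2 = m * (m + 1) := by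
    have hg := Finset.sum_range_id_mul_two m
    have hsplit : (∑ a ∈ Finset.range m, (a + 1)) =
        (∑ a ∈ Finset.range m, a) + ∑ _a ∈ Finset.range m, 1 := by
      rw [← Finset.sum_add_distrib]
    have hone : (∑ _a ∈ Finset.range m, (1:ℕ)) = m := by simp
    have hmm : m * (m + 1) = m * (m - 1) + 2 * m := by
      obtain ⟨k, rfl⟩ := Nat.exists_eq_add_of_le hm1
      have e : 1 + k - 1 = k := by omega
      rw [e]; ring
    omega
  have h8 : (2*m) ^ 2 + 2 * (2*m) = 8 * c := by
    have : (2*m) ^ 2 + 2 * (2*m) = 4 * (m * (m + 1)) := by ring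
    omega
  rw [h8, Nat.mul_div_cancel_left _ (by norm_num : (0:ℕ) < 8)]
  omega
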